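/- For every positive integer m, the greedy algorithm with respect to the Lagonacci sequence terminates: there exist k ≥ 1 and strictly decreasing indices j_1 > j_2 > ... > j_k such that m = Z_{j_1} + ... + Z_{j_k}, where at each step the largest term Z_j ≤ remaining value is chosen. -/

import Mathlib

/-- The Lagonacci sequence: `Z 0 = 1, Z 1 = 2, Z 2 = 3`, `Z (n+3) = Z (n+1) + Z n`. -/
def Z : ℕ → ℕ
  | 0 => 1
  | 1 => 2
  | 2 => 3
  | n + 3 => Z (n + 1) + Z n

theorem Z_pos : ∀ n, 0 < Z n
  | 0 => by simp [Z]
  | 1 => by simp [Z]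
  | 2 => by simp [Z]
  | n + 3 => by
      have := Z_pos n
      simp [Z]; omega

/-- The index of the largest Lagonacci number not exceeding `m`. -/
def greedyIndex (m : ℕ) : ℕ := Nat.findGreatest (fun j => Z j ≤ m) m

theorem greedy_le {m : ℕ} (hm : 1 ≤ m) : Z (greedyIndex m) ≤ m :=
  Nat.findGreatest_spec (P := fun j => Z j ≤ m) (Nat.zero_le m) (by simpa [Z] using hm)

/-- The list of indices produced by the greedy algorithm on `m`. -/
def greedyList : ℕ → List ℕ
  | 0 => []
  | m + 1 => greedyIndex (m + 1) :: greedyList (m + 1 - Z (greedyIndex (m + 1)))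
decreasing_by
  have h1 := Z_pos (greedyIndex (m + 1))
  omega

/-- The number of summands in the greedy Lagonacci decomposition of `m`. -/
def k (m : ℕ) : ℕ := (greedyList m).length

theorem Z_le_succ : ∀ n, Z n ≤ Z (n + 1)
  | 0 => by simp [Z]
  | 1 => by simp [Z]
  | 2 => by simp [Z]
  | n + 3 => by
      have h : Z (n + 1) ≤ Z (n + 2) := Z_le_succ (n + 1)
      have h' : Z n ≤ Z (n + 1) := Z_le_succ n
      show Z (n + 1) + Z n ≤ Z (n + 2) + Z (n + 1)
      omega

theorem Z_monotone : Monotone Z := monotone_nat_of_le_succ Z_le_succ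

theorem Z_ge : ∀ n, n ≤ Z n
  | 0 => by simp [Z]
  | 1 => by simp [Z]
  | 2 => by simp [Z]
  | 3 => by simp [Z]
  | n + 4 => by
      have h1 : n + 2 ≤ Z (n + 2) := Z_ge (n + 2)
      have h2 : Z 1 ≤ Z (n + 1) := Z_monotone (by omega)
      show n + 4 ≤ Z (n + 2) + Z (n + 1)
      simp [Z] at h2
      omega

theorem Z_succ_le_two : ∀ j, Z (j + 1) ≤ Z j + Z j
  | 0 => by simp [Z]
  | 1 => by simp [Z]
  | j + 2 => by
      show Z (j + 1) + Z j ≤ Z (j + 2) + Z (j + 2)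
      have h1 : Z j ≤ Z (j + 2) := Z_monotone (by omega)
      have h2 : Z (j + 1) ≤ Z (j + 2) := Z_monotone (by omega)
      omega

theorem greedy_lt {m : ℕ} (hm : 1 ≤ m) : m < Z (greedyIndex m) + Z (greedyIndex m) := by
  set j := greedyIndex m with hj
  have hle : j ≤ m := by rw [hj, greedyIndex]; exact Nat.findGreatest_le m
  rcases lt_or_eq_of_le hle with h | h
  · have : ¬ Z (j + 1) ≤ m :=
      Nat.findGreatest_is_greatest (P := fun i => Z i ≤ m) (n := m) (k := j + 1)
        (by simp only [hj, greedyIndex]; omega) (by omega)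
    have := Z_succ_le_two j
    omega
  · have h1 := greedy_le hm
    have h2 := Z_ge j
    have h3 := Z_pos j
    omega

/-- The greedy algorithm terminates on every positive integer, producing
`k ≥ 1` strictly decreasing indices whose Lagonacci values sum to `m`. -/
theorem greedy_terminates (m : ℕ) (hm : 1 ≤ m) :
    greedyList m ≠ [] ∧ List.Chain' (fun a b => b < a) (greedyList m) ∧
      ((greedyList m).map Z).sum = m := by
  induction m using Nat.strong_induction_on with
  | _ m ih =>
    obtain ⟨n, rfl⟩ : ∃ n, m = n + 1 := ⟨m - 1, by omega⟩
    rw [greedyList]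
    set j := greedyIndex (n + 1) with hj
    have hZ : Z j ≤ n + 1 := greedy_le hm
    have h2 : n + 1 < Z j + Z j := greedy_lt hm
    have hZp := Z_pos j
    set r := n + 1 - Z j with hr
    by_cases h0 : r = 0
    · rw [h0]
      refine ⟨by simp, by simp [greedyList]; exact List.isChain_singleton j, ?_⟩
      simp [greedyList]
      omega
    · obtain ⟨hne, hch, hsum⟩ := ih r (by omega) (by omega)
      refine ⟨by simp, ?_, by simp [hsum]; omega⟩
      have hlt : greedyIndex r < j := by
        by_contra hc
        have hge : Z j ≤ Z (greedyIndex r) := Z_monotone (by omega)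
        have := greedy_le (m := r) (by omega)
        omega
      obtain ⟨r', hr'⟩ : ∃ r', r = r' + 1 := ⟨r - 1, by omega⟩
      rw [hr'] at hlt hch ⊢
      rw [greedyList] at hch ⊢
      exact List.IsChain.cons_cons hlt hch
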